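/- If P* is an optimal solution of the max-min fairness problem (i.e., P* is feasible and min_k R_k(P*) ≥ min_k R_k(P) for every feasible P), then all users achieve the same rate at P*: R_j(P*) = R_k(P*) for all j, k ∈ {1, …, K}. -/

import Mathlib

/-- Achievable rate of user `k` in downlink NOMA:
`R_k(P) = log₂(1 + P_k g_k / (g_k ∑_{j<k} P_j + 1))`
(for `k = 0`, i.e. user 1, the sum is empty and this is `log₂(1 + P_1 g_1)`). -/
noncomputable def rate {K : ℕ} (g P : Fin K → ℝ) (k : Fin K) : ℝ :=
  Real.logb 2
    (1 + P k * g k / (g k * (∑ j ∈ Finset.univ.filter (fun j => j < k), P j) + 1))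

/-- A power vector is feasible if it is entrywise nonnegative and respects the
total power budget. -/
def Feasible (K : ℕ) (P_T : ℝ) (P : Fin K → ℝ) : Prop :=
  (∀ k, 0 ≤ P k) ∧ ∑ k, P k ≤ P_T

/-- The minimum achievable rate among the `K` users. -/
noncomputable def minRate {K : ℕ} (g P : Fin K → ℝ) : ℝ :=
  ⨅ k, rate g P k

noncomputable def Ssum {K : ℕ} (g : Fin K → ℝ) (c : ℝ) : ℕ → ℝ
  | 0 => 0
  | n + 1 => Ssum g c n + (if h : n < K then c * (Ssum g c n + 1 / g ⟨n, h⟩) else 0)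

lemma Ssum_nonneg {K : ℕ} {g : Fin K → ℝ} {c : ℝ} (hg : ∀ k, 0 < g k) (hc : 0 ≤ c) :
    ∀ n, 0 ≤ Ssum g c n := by
  intro n
  induction n with
  | zero => simp [Ssum]
  | succ n ih =>
    rw [Ssum]
    refine add_nonneg ih ?_
    split
    · exact mul_nonneg hc (add_nonneg ih (one_div_nonneg.mpr (hg _).le))
    · exact le_refl 0

lemma sum_filter_lt_eq_range {K : ℕ} (f : Fin K → ℝ) (k : Fin K) :
    ∑ j ∈ Finset.univ.filter (fun j => j < k), f j
      = ∑ i ∈ Finset.range k.val, (if h : i < K then f ⟨i, h⟩ else 0) := by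
  rw [Finset.sum_filter]
  calc ∑ j : Fin K, (if j < k then f j else 0)
      = ∑ i ∈ Finset.range K,
          (if h : i < K then (if i < k.val then f ⟨i, h⟩ else 0) else 0) := by
        rw [← Fin.sum_univ_eq_sum_range
          (fun i => if h : i < K then (if i < k.val then f ⟨i, h⟩ else 0) else 0) K]
        refine Finset.sum_congr rfl fun j _ => ?_
        simp only [j.isLt, dif_pos, Fin.eta, Fin.lt_def]
    _ = ∑ i ∈ Finset.range k.val,
          (if h : i < K then (if i < k.val then f ⟨i, h⟩ else 0) else 0) := by
        refine (Finset.sum_subset (Finset.range_subset_range.mpr k.isLt.le) ?_).symm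
        intro x _ hnx
        have hx : ¬ x < k.val := by simpa using hnx
        simp [hx]
    _ = ∑ i ∈ Finset.range k.val, (if h : i < K then f ⟨i, h⟩ else 0) := by
        refine Finset.sum_congr rfl fun i hi => ?_
        have hik : i < k.val := Finset.mem_range.mp hi
        rw [dif_pos (hik.trans k.isLt), if_pos hik, dif_pos (hik.trans k.isLt)]

lemma Ssum_eq_prefix {K : ℕ} (g : Fin K → ℝ) (c : ℝ) :
    ∀ n, n ≤ K →
      ∑ i ∈ Finset.range n, (if h : i < K then c * (Ssum g c i + 1 / g ⟨i, h⟩) else 0)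
        = Ssum g c n := by
  intro n
  induction n with
  | zero => simp [Ssum]
  | succ n ih =>
    intro hn
    rw [Finset.sum_range_succ, ih (Nat.le_of_succ_le hn), Ssum]

theorem stmt_2 (K : ℕ) (hK : 1 ≤ K) (g : Fin K → ℝ)
    (hgpos : ∀ k, 0 < g k) (hgdec : StrictAnti g)
    (P_T : ℝ) (hPT : 0 < P_T)
    (Pstar : Fin K → ℝ) (hfeas : Feasible K P_T Pstar)
    (hopt : ∀ Q : Fin K → ℝ, Feasible K P_T Q → minRate g Q ≤ minRate g Pstar) :
    ∀ j k : Fin K, rate g Pstar j = rate g Pstar k := by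
  have hne : Nonempty (Fin K) := ⟨⟨0, hK⟩⟩
  have h2 : (1:ℝ) < 2 := one_lt_two
  set t := minRate g Pstar with ht_def
  have hmin_le : ∀ k, t ≤ rate g Pstar k := fun k =>
    ciInf_le ((Set.finite_range _).bddBelow) k
  -- the optimal value is positive
  have ht : 0 < t := by
    have hKpos : (0:ℝ) < K := by exact_mod_cast hK
    have hUpos : 0 < P_T / (K:ℝ) := div_pos hPT hKpos
    set U : Fin K → ℝ := fun _ => P_T / K with hU
    have feasU : Feasible K P_T U := by
      constructor
      · intro k; exact hUpos.le
      · have h1 : ∑ _k : Fin K, P_T / (K:ℝ) = (K:ℝ) * (P_T / K) := by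
          rw [Finset.sum_const, Finset.card_univ, Fintype.card_fin, nsmul_eq_mul]
        simp only [hU]
        rw [h1, mul_comm, div_mul_cancel₀ _ (ne_of_gt hKpos)]
    have hUrate : ∀ k, 0 < rate g U k := by
      intro k
      have hS : 0 ≤ ∑ j ∈ Finset.univ.filter (fun j => j < k), U j :=
        Finset.sum_nonneg fun j _ => hUpos.le
      have hgk := hgpos k
      have hD : 0 < g k * (∑ j ∈ Finset.univ.filter (fun j => j < k), U j) + 1 := by
        nlinarith
      have hx : 0 < U k * g k /
          (g k * (∑ j ∈ Finset.univ.filter (fun j => j < k), U j) + 1) :=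
        div_pos (mul_pos hUpos hgk) hD
      exact Real.logb_pos h2 (by simp only [rate] at *; linarith)
    obtain ⟨m, hm⟩ := exists_eq_ciInf_of_finite (f := fun k => rate g U k)
    have hmu : 0 < minRate g U := by
      simp only [minRate]; rw [← hm]; exact hUrate m
    exact lt_of_lt_of_le hmu (hopt U feasU)
  set c : ℝ := (2:ℝ) ^ t - 1 with hc_def
  have h2t : (2:ℝ) ^ t = 1 + c := by simp [hc_def]
  have hc : 0 < c := by
    have h0 : (2:ℝ) ^ (0:ℝ) < (2:ℝ) ^ t := (Real.rpow_lt_rpow_left_iff h2).mpr ht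
    rw [Real.rpow_zero] at h0
    simp only [hc_def]; linarith
  -- key pointwise bound at Pstar
  have key : ∀ k : Fin K,
      (c * ((∑ j ∈ Finset.univ.filter (fun j => j < k), Pstar j) + 1 / g k) ≤ Pstar k)
      ∧ (t < rate g Pstar k →
        c * ((∑ j ∈ Finset.univ.filter (fun j => j < k), Pstar j) + 1 / g k) < Pstar k) := by
    intro k
    set S := ∑ j ∈ Finset.univ.filter (fun j => j < k), Pstar j with hS_def
    have hS0 : 0 ≤ S := Finset.sum_nonneg fun j _ => hfeas.1 j
    have hgk := hgpos k
    have hD : 0 < g k * S + 1 := by nlinarith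
    set x := Pstar k * g k / (g k * S + 1) with hx_def
    have hrate_eq : rate g Pstar k = Real.logb 2 (1 + x) := rfl
    have hx0 : 0 ≤ x := div_nonneg (mul_nonneg (hfeas.1 k) hgk.le) hD.le
    have hxP : x * (S + 1 / g k) = Pstar k := by
      rw [hx_def]
      field_simp
    have hSg : 0 < S + 1 / g k := by positivity
    have hcx : c ≤ x := by
      have h1 : (2:ℝ) ^ t ≤ 1 + x := by
        have h3 := hmin_le k
        rw [hrate_eq] at h3
        exact (Real.le_logb_iff_rpow_le h2 (by linarith)).mp h3
      linarith
    constructor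
    · calc c * (S + 1 / g k) ≤ x * (S + 1 / g k) :=
            mul_le_mul_of_nonneg_right hcx hSg.le
        _ = Pstar k := hxP
    · intro hlt
      have h1 : (2:ℝ) ^ t < 1 + x := by
        rw [hrate_eq] at hlt
        exact (Real.lt_logb_iff_rpow_lt h2 (by linarith)).mp hlt
      have hcx' : c < x := by linarith
      calc c * (S + 1 / g k) < x * (S + 1 / g k) :=
            mul_lt_mul_of_pos_right hcx' hSg
        _ = Pstar k := hxP
  -- the equal-rate vector
  set Q : Fin K → ℝ := fun k => c * (Ssum g c k.val + 1 / g k) with hQ_def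
  have hSnn := Ssum_nonneg (g := g) (c := c) hgpos hc.le
  have hSfilter : ∀ k : Fin K,
      ∑ j ∈ Finset.univ.filter (fun j => j < k), Q j = Ssum g c k.val := by
    intro k
    rw [sum_filter_lt_eq_range Q k, ← Ssum_eq_prefix g c k.val k.isLt.le]
  have hQpos : ∀ k, 0 < Q k := fun k =>
    mul_pos hc (add_pos_of_nonneg_of_pos (hSnn k.val) (one_div_pos.mpr (hgpos k)))
  -- comparison of prefix sums
  have hSle : ∀ n, n ≤ K → Ssum g c n ≤
      ∑ i ∈ Finset.range n, (if h : i < K then Pstar ⟨i, h⟩ else 0) := by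
    intro n
    induction n with
    | zero => simp [Ssum]
    | succ n ih =>
      intro hn
      have hnK : n < K := hn
      have ihn := ih (Nat.le_of_succ_le hn)
      rw [Finset.sum_range_succ, Ssum, dif_pos hnK, dif_pos hnK]
      have hfil : ∑ j ∈ Finset.univ.filter (fun j => j < (⟨n, hnK⟩ : Fin K)), Pstar j
          = ∑ i ∈ Finset.range n, (if h : i < K then Pstar ⟨i, h⟩ else 0) :=
        sum_filter_lt_eq_range Pstar ⟨n, hnK⟩
      have hk := (key ⟨n, hnK⟩).1
      rw [hfil] at hk
      have hmul : c * (Ssum g c n + 1 / g ⟨n, hnK⟩) ≤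
          c * ((∑ i ∈ Finset.range n, (if h : i < K then Pstar ⟨i, h⟩ else 0)) +
            1 / g ⟨n, hnK⟩) :=
        mul_le_mul_of_nonneg_left (add_le_add_left ihn _) hc.le
      linarith
  have hQle : ∀ k, Q k ≤ Pstar k := by
    intro k
    have h1 := hSle k.val k.isLt.le
    have hk := (key k).1
    rw [sum_filter_lt_eq_range Pstar k] at hk
    calc Q k = c * (Ssum g c k.val + 1 / g k) := rfl
      _ ≤ c * ((∑ i ∈ Finset.range k.val, (if h : i < K then Pstar ⟨i, h⟩ else 0)) +
            1 / g k) := mul_le_mul_of_nonneg_left (add_le_add_left h1 _) hc.le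
      _ ≤ Pstar k := hk
  -- main argument
  suffices hall : ∀ k, rate g Pstar k = t by
    intro j k; rw [hall j, hall k]
  intro k0
  by_contra hne0
  have hgt : t < rate g Pstar k0 := lt_of_le_of_ne (hmin_le k0) (Ne.symm hne0)
  have hQlt : Q k0 < Pstar k0 := by
    have h1 := hSle k0.val k0.isLt.le
    have hk := (key k0).2 hgt
    rw [sum_filter_lt_eq_range Pstar k0] at hk
    calc Q k0 = c * (Ssum g c k0.val + 1 / g k0) := rfl
      _ ≤ c * ((∑ i ∈ Finset.range k0.val, (if h : i < K then Pstar ⟨i, h⟩ else 0)) +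
            1 / g k0) := mul_le_mul_of_nonneg_left (add_le_add_left h1 _) hc.le
      _ < Pstar k0 := hk
  have hsumlt : ∑ k, Q k < P_T :=
    lt_of_lt_of_le
      (lt_of_lt_of_le (Finset.sum_lt_sum (fun i _ => hQle i)
        ⟨k0, Finset.mem_univ k0, hQlt⟩) (le_refl _))
      hfeas.2
  have hsumpos : 0 < ∑ k, Q k :=
    Finset.sum_pos (fun i _ => hQpos i) Finset.univ_nonempty
  set l := P_T / ∑ k, Q k with hl_def
  have hl1 : 1 < l := (one_lt_div hsumpos).mpr hsumlt
  set Q' : Fin K → ℝ := fun k => l * Q k with hQ'_def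
  have feas' : Feasible K P_T Q' := by
    constructor
    · intro k; exact (mul_pos (lt_trans one_pos hl1) (hQpos k)).le
    · simp only [hQ'_def]
      rw [← Finset.mul_sum, hl_def, div_mul_cancel₀ _ (ne_of_gt hsumpos)]
  have hrate' : ∀ k, t < rate g Q' k := by
    intro k
    have hfil' : ∑ j ∈ Finset.univ.filter (fun j => j < k), Q' j
        = l * Ssum g c k.val := by
      simp only [hQ'_def]
      rw [← Finset.mul_sum, hSfilter k]
    have hS0 := hSnn k.val
    have hgk := hgpos k
    have hD : (1:ℝ) ≤ g k * Ssum g c k.val + 1 := by nlinarith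
    have hden : 0 < g k * (l * Ssum g c k.val) + 1 := by nlinarith
    have hfrac : c < Q' k * g k / (g k * (l * Ssum g c k.val) + 1) := by
      rw [lt_div_iff₀ hden]
      have hQk : Q' k * g k = l * c * (g k * Ssum g c k.val + 1) := by
        simp only [hQ'_def, hQ_def]
        field_simp
      rw [hQk]
      nlinarith
    have hre : rate g Q' k
        = Real.logb 2 (1 + Q' k * g k / (g k * (l * Ssum g c k.val) + 1)) := by
      simp only [rate]; rw [hfil']
    rw [hre]
    have hte : t = Real.logb 2 (1 + c) := by
      rw [← h2t, Real.logb_rpow (by norm_num) (by norm_num)]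
    rw [hte]
    exact Real.logb_lt_logb h2 (by linarith) (by linarith)
  obtain ⟨m', hm'⟩ := exists_eq_ciInf_of_finite (f := fun k => rate g Q' k)
  have hle1 : minRate g Q' ≤ t := hopt Q' feas'
  have hlt1 : t < minRate g Q' := by
    simp only [minRate]; rw [← hm']; exact hrate' m'
  linarith
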